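/- Let A = (M₁+φ) − (N₁+φ) be a splitting of A ∈ ℝ^{n×n} with φ diagonal and φ₁, φ₂ positive diagonal, suppose M_{φ₁} + φ_{φ₁} + φ₂ is nonsingular, and let G ≥ 0 satisfy |ψ(x) − ψ(y)| ≤ G|x − y| for all x, y ∈ ℝⁿ. If z* solves ICP(q,A,ψ) and z^{k+1} is obtained from z^k by one step of Method 3.1, then entrywise |z^{k+1} − z*| ≤ |(M_{φ₁}+φ_{φ₁}+φ₂)⁻¹| (|N_{φ₁}+φ_{φ₁}| + |A_{φ₁}−φ₂| + 2φ₂G) |z^k − z*|. -/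

import Mathlib

open Matrix Finset

noncomputable def specRad {n : ℕ} (A : Matrix (Fin n) (Fin n) ℝ) : ℝ :=
  (spectralRadius ℂ (A.map (algebraMap ℝ ℂ))).toReal

def matAbs {n : ℕ} (A : Matrix (Fin n) (Fin n) ℝ) : Matrix (Fin n) (Fin n) ℝ :=
  fun i j => |A i j|

def vecAbs {n : ℕ} (x : Fin n → ℝ) : Fin n → ℝ := fun i => |x i|

def cmpMat {n : ℕ} (A : Matrix (Fin n) (Fin n) ℝ) : Matrix (Fin n) (Fin n) ℝ :=
  fun i j => if i = j then |A i j| else -|A i j|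

def PosDiag {n : ℕ} (Φ : Matrix (Fin n) (Fin n) ℝ) : Prop :=
  Φ.IsDiag ∧ ∀ i, 0 < Φ i i

def ZMat {n : ℕ} (A : Matrix (Fin n) (Fin n) ℝ) : Prop :=
  ∀ i j, i ≠ j → A i j ≤ 0

def NonsingularMMatrix {n : ℕ} (A : Matrix (Fin n) (Fin n) ℝ) : Prop :=
  ZMat A ∧ IsUnit A.det ∧ ∀ i j, 0 ≤ A⁻¹ i j

def SDD {n : ℕ} (A : Matrix (Fin n) (Fin n) ℝ) : Prop :=
  ∀ i, ∑ j ∈ Finset.univ.erase i, |A i j| < |A i i|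

def ICPsol {n : ℕ} (A : Matrix (Fin n) (Fin n) ℝ) (q : Fin n → ℝ)
    (ψ : (Fin n → ℝ) → (Fin n → ℝ)) (z : Fin n → ℝ) : Prop :=
  (∀ i, 0 ≤ (A *ᵥ z + q) i) ∧ (∀ i, 0 ≤ (z - ψ z) i) ∧ (A *ᵥ z + q) ⬝ᵥ (z - ψ z) = 0

def HplusMatrix {n : ℕ} (A : Matrix (Fin n) (Fin n) ℝ) : Prop :=
  NonsingularMMatrix (cmpMat A) ∧ ∀ i, 0 < A i i

lemma diag_mulVec {n : ℕ} {D : Matrix (Fin n) (Fin n) ℝ} (hD : D.IsDiag)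
    (v : Fin n → ℝ) (i : Fin n) : (D *ᵥ v) i = D i i * v i := by
  simp only [Matrix.mulVec, dotProduct]
  rw [Finset.sum_eq_single i]
  · intro j _ hj
    rw [hD (Ne.symm hj), zero_mul]
  · intro h; exact absurd (Finset.mem_univ i) h

lemma abs_mulVec_le {n : ℕ} (B : Matrix (Fin n) (Fin n) ℝ) (v : Fin n → ℝ) (i : Fin n) :
    |(B *ᵥ v) i| ≤ (matAbs B *ᵥ vecAbs v) i := by
  simp only [Matrix.mulVec, dotProduct, matAbs, vecAbs]
  exact (Finset.abs_sum_le_sum_abs _ _).trans (le_of_eq (by simp [abs_mul]))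

lemma mulVec_mono {n : ℕ} {B : Matrix (Fin n) (Fin n) ℝ} (hB : ∀ i j, 0 ≤ B i j)
    {u w : Fin n → ℝ} (h : ∀ j, u j ≤ w j) (i : Fin n) : (B *ᵥ u) i ≤ (B *ᵥ w) i := by
  simp only [Matrix.mulVec, dotProduct]
  exact Finset.sum_le_sum fun j _ => mul_le_mul_of_nonneg_left (h j) (hB i j)


/-- the one-step error bound for Method 3.1. -/
theorem stmt_5 {n : ℕ} (A M₁ N₁ φ φ₁ φ₂ G : Matrix (Fin n) (Fin n) ℝ)
    (q : Fin n → ℝ) (ψ : (Fin n → ℝ) → (Fin n → ℝ))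
    (hsplit : A = (M₁ + φ) - (N₁ + φ))
    (hφ : φ.IsDiag) (hφ₁ : PosDiag φ₁) (hφ₂ : PosDiag φ₂)
    (hns : IsUnit (φ₁ * M₁ + φ₁ * φ + φ₂).det)
    (hG : ∀ i j, 0 ≤ G i j)
    (hψ : ∀ x y : Fin n → ℝ, ∀ i, |ψ x i - ψ y i| ≤ (G *ᵥ vecAbs (x - y)) i)
    (zstar : Fin n → ℝ) (hz : ICPsol A q ψ zstar)
    (zk zk1 : Fin n → ℝ)
    (hstep : zk1 = (φ₁ * M₁ + φ₁ * φ + φ₂)⁻¹ *ᵥ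
      ((φ₁ * N₁ + φ₁ * φ) *ᵥ zk +
        vecAbs ((φ₁ * A - φ₂) *ᵥ zk + φ₁ *ᵥ q + φ₂ *ᵥ ψ zk) -
        φ₁ *ᵥ q + φ₂ *ᵥ ψ zk)) :
    ∀ i, |zk1 i - zstar i| ≤
      ((matAbs ((φ₁ * M₁ + φ₁ * φ + φ₂)⁻¹) *
        (matAbs (φ₁ * N₁ + φ₁ * φ) + matAbs (φ₁ * A - φ₂) + 2 • (φ₂ * G))) *ᵥ
        vecAbs (zk - zstar)) i := by
  obtain ⟨ha, hb, hab⟩ := hz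
  set Mt := φ₁ * M₁ + φ₁ * φ + φ₂ with hMtdef
  set Nt := φ₁ * N₁ + φ₁ * φ with hNtdef
  set R := φ₁ * A - φ₂ with hRdef
  set a := A *ᵥ zstar + q with hadef
  set b := zstar - ψ zstar with hbdef
  have hA : φ₁ * A = φ₁ * M₁ - φ₁ * N₁ := by
    rw [hsplit]; noncomm_ring
  -- componentwise complementarity
  have hcompl : ∀ i, a i * b i = 0 := by
    intro i
    have hsum : ∑ j, a j * b j = 0 := hab
    exact (Finset.sum_eq_zero_iff_of_nonneg
      (fun j _ => mul_nonneg (ha j) (hb j))).mp hsum i (Finset.mem_univ i)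
  -- the vector whose abs is taken, at zstar
  have hrstar : R *ᵥ zstar + φ₁ *ᵥ q + φ₂ *ᵥ ψ zstar = φ₁ *ᵥ a - φ₂ *ᵥ b := by
    rw [hRdef, Matrix.sub_mulVec, hadef, hbdef, Matrix.mulVec_add, Matrix.mulVec_sub,
      ← Matrix.mulVec_mulVec]
    abel
  -- modulus identity
  have hmod : vecAbs (φ₁ *ᵥ a - φ₂ *ᵥ b) = φ₁ *ᵥ a + φ₂ *ᵥ b := by
    funext i
    have h1 : (φ₁ *ᵥ a) i = φ₁ i i * a i := diag_mulVec hφ₁.1 a i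
    have h2 : (φ₂ *ᵥ b) i = φ₂ i i * b i := diag_mulVec hφ₂.1 b i
    simp only [vecAbs, Pi.sub_apply, Pi.add_apply, h1, h2]
    rcases mul_eq_zero.mp (hcompl i) with h | h
    · rw [h, mul_zero, zero_sub, zero_add, abs_neg,
        abs_of_nonneg (mul_nonneg (hφ₂.2 i).le (hb i))]
    · rw [h, mul_zero, sub_zero, add_zero,
        abs_of_nonneg (mul_nonneg (hφ₁.2 i).le (ha i))]
  -- fixed point equation
  have hMN : Mt = Nt + (φ₁ * A + φ₂) := by rw [hMtdef, hNtdef, hA]; abel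
  have hfa : φ₁ *ᵥ a = (φ₁ * A) *ᵥ zstar + φ₁ *ᵥ q := by
    rw [hadef, Matrix.mulVec_add, Matrix.mulVec_mulVec]
  have hfb : φ₂ *ᵥ b = φ₂ *ᵥ zstar - φ₂ *ᵥ ψ zstar := by
    rw [hbdef, Matrix.mulVec_sub]
  have hfix : Mt *ᵥ zstar =
      Nt *ᵥ zstar + vecAbs (R *ᵥ zstar + φ₁ *ᵥ q + φ₂ *ᵥ ψ zstar) - φ₁ *ᵥ q
        + φ₂ *ᵥ ψ zstar := by
    rw [hrstar, hmod, hMN, Matrix.add_mulVec, Matrix.add_mulVec, Matrix.add_mulVec, hfa, hfb]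
    abel
  -- invertibility
  have hinv : Mt⁻¹ * Mt = 1 := Matrix.nonsing_inv_mul Mt hns
  have hzs : zstar = Mt⁻¹ *ᵥ (Mt *ᵥ zstar) := by
    rw [Matrix.mulVec_mulVec, hinv, Matrix.one_mulVec]
  set e := zk - zstar with hedef
  set rk := R *ᵥ zk + φ₁ *ᵥ q + φ₂ *ᵥ ψ zk with hrkdef
  set rs := R *ᵥ zstar + φ₁ *ᵥ q + φ₂ *ᵥ ψ zstar with hrsdef
  set v := Nt *ᵥ e + (vecAbs rk - vecAbs rs) + φ₂ *ᵥ (ψ zk - ψ zstar) with hvdef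
  have huv : (Nt *ᵥ zk + vecAbs rk - φ₁ *ᵥ q + φ₂ *ᵥ ψ zk)
      - (Nt *ᵥ zstar + vecAbs rs - φ₁ *ᵥ q + φ₂ *ᵥ ψ zstar) = v := by
    rw [hvdef, hedef, Matrix.mulVec_sub, Matrix.mulVec_sub]
    abel
  have hdiff : zk1 - zstar = Mt⁻¹ *ᵥ v := by
    calc zk1 - zstar
        = Mt⁻¹ *ᵥ (Nt *ᵥ zk + vecAbs rk - φ₁ *ᵥ q + φ₂ *ᵥ ψ zk)
          - Mt⁻¹ *ᵥ (Mt *ᵥ zstar) := by rw [← hzs, hstep]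
      _ = Mt⁻¹ *ᵥ ((Nt *ᵥ zk + vecAbs rk - φ₁ *ᵥ q + φ₂ *ᵥ ψ zk) - Mt *ᵥ zstar) :=
          (Matrix.mulVec_sub _ _ _).symm
      _ = Mt⁻¹ *ᵥ v := by rw [hfix, huv]
  have hrdiff : rk - rs = R *ᵥ e + φ₂ *ᵥ (ψ zk - ψ zstar) := by
    rw [hrkdef, hrsdef, hedef, Matrix.mulVec_sub, Matrix.mulVec_sub]
    abel
  -- the bound on v
  set w := (matAbs Nt + matAbs R + 2 • (φ₂ * G)) *ᵥ vecAbs e with hwdef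
  have hφ₂G : ∀ j, |(φ₂ *ᵥ (ψ zk - ψ zstar)) j| ≤ ((φ₂ * G) *ᵥ vecAbs e) j := by
    intro j
    rw [diag_mulVec hφ₂.1, ← Matrix.mulVec_mulVec, diag_mulVec hφ₂.1, abs_mul,
      abs_of_pos (hφ₂.2 j)]
    refine mul_le_mul_of_nonneg_left ?_ (hφ₂.2 j).le
    have := hψ zk zstar j
    simpa [vecAbs, Pi.sub_apply, hedef] using this
  have hv : ∀ j, |v j| ≤ w j := by
    intro j
    have h1 : |(Nt *ᵥ e) j| ≤ (matAbs Nt *ᵥ vecAbs e) j := abs_mulVec_le Nt e j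
    have h2 : |vecAbs rk j - vecAbs rs j| ≤ (matAbs R *ᵥ vecAbs e) j + ((φ₂ * G) *ᵥ vecAbs e) j := by
      refine (abs_abs_sub_abs_le_abs_sub _ _).trans ?_
      have : rk j - rs j = (R *ᵥ e) j + (φ₂ *ᵥ (ψ zk - ψ zstar)) j := by
        rw [show rk j - rs j = (rk - rs) j from rfl, hrdiff]; rfl
      rw [this]
      exact (abs_add_le _ _).trans (add_le_add (abs_mulVec_le R e j) (hφ₂G j))
    have h3 := hφ₂G j
    have hw : w j = (matAbs Nt *ᵥ vecAbs e) j + ((matAbs R *ᵥ vecAbs e) j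
        + ((φ₂ * G) *ᵥ vecAbs e) j) + ((φ₂ * G) *ᵥ vecAbs e) j := by
      rw [hwdef, Matrix.add_mulVec, Matrix.add_mulVec, two_smul, Matrix.add_mulVec]
      simp only [Pi.add_apply]; ring
    rw [hvdef, hw]
    calc |(Nt *ᵥ e + (vecAbs rk - vecAbs rs) + φ₂ *ᵥ (ψ zk - ψ zstar)) j|
        ≤ |(Nt *ᵥ e) j + (vecAbs rk j - vecAbs rs j)| + |(φ₂ *ᵥ (ψ zk - ψ zstar)) j| := by
          simpa using abs_add_le ((Nt *ᵥ e) j + (vecAbs rk j - vecAbs rs j)) _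
      _ ≤ (|(Nt *ᵥ e) j| + |vecAbs rk j - vecAbs rs j|) + |(φ₂ *ᵥ (ψ zk - ψ zstar)) j| :=
          add_le_add_left (abs_add_le _ _) _
      _ ≤ _ := add_le_add (add_le_add h1 h2) h3
  intro i
  have : |zk1 i - zstar i| = |(Mt⁻¹ *ᵥ v) i| := by
    rw [show zk1 i - zstar i = (zk1 - zstar) i from rfl, hdiff]
  rw [this, ← Matrix.mulVec_mulVec]
  calc |(Mt⁻¹ *ᵥ v) i| ≤ (matAbs Mt⁻¹ *ᵥ vecAbs v) i := abs_mulVec_le _ v i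
    _ ≤ (matAbs Mt⁻¹ *ᵥ w) i := mulVec_mono (fun i j => abs_nonneg _) hv i
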